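/- The coefficient of t^m in the formal power series log(1 − r t + t^2) over Q equals −Σ_{a + 2b = m} (−1)^b · binom(a+b, b) · r^a/(a+b), where the sum runs over nonnegative integers a, b with a + 2b = m (and m ≥ 1). -/

import Mathlib

noncomputable section

/-- The coefficient of `t^m` in the formal power series `log(1 − r t + t²)`, defined via
`log(1−u) = −Σ_{j≥1} u^j/j` with `u = r t − t²`; since `u` has positive order, only the
terms with `j ≤ m` contribute to the coefficient of `t^m`. -/
def logCoeff (r : ℚ) (m : ℕ) : ℚ :=
  -∑ j ∈ Finset.Icc 1 m,
      (1 / (j : ℚ)) *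
        PowerSeries.coeff m ((PowerSeries.C r * PowerSeries.X - PowerSeries.X ^ 2) ^ j)

open Polynomial in
lemma coeff_key (r : ℚ) (m j : ℕ) (hj : j ≤ m) :
    PowerSeries.coeff m ((PowerSeries.C r * PowerSeries.X - PowerSeries.X ^ 2) ^ j)
      = (-1 : ℚ) ^ j * (-r) ^ (j - (m - j)) * (j.choose (m - j) : ℚ) := by
  have hcast : (PowerSeries.C r * PowerSeries.X - PowerSeries.X ^ 2 : PowerSeries ℚ)
      = ((C r * X - X ^ 2 : ℚ[X]) : PowerSeries ℚ) := by
    push_cast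
    rfl
  have base : (C r * X - X ^ 2 : ℚ[X]) = X * (C ((-1 : ℚ)) * (X + C (-r))) := by
    rw [map_neg, map_neg, map_one]
    ring
  have hfac : (C r * X - X ^ 2 : ℚ[X]) ^ j = X ^ j * (C ((-1 : ℚ) ^ j) * (X + C (-r)) ^ j) := by
    rw [base, mul_pow, mul_pow, map_pow]
  rw [hcast, ← Polynomial.coe_pow, Polynomial.coeff_coe, hfac,
    Polynomial.coeff_X_pow_mul', if_pos hj, Polynomial.coeff_C_mul,
    Polynomial.coeff_X_add_C_pow]
  ring

/-- For `m ≥ 1`, the coefficient of `t^m` in `log(1 − r t + t²)` equals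
`−Σ_{a+2b=m} (−1)^b · C(a+b, b) · r^a/(a+b)`, the sum running over nonnegative integers
`a, b` with `a + 2b = m` (parametrized by `b ≤ m/2`, with `a = m − 2b`, `a + b = m − b`). -/
theorem logCoeff_formula (r : ℚ) (m : ℕ) (hm : 1 ≤ m) :
    logCoeff r m =
      -∑ b ∈ Finset.range (m / 2 + 1),
          ((-1 : ℚ) ^ b * (Nat.choose (m - b) b : ℚ) * r ^ (m - 2 * b)) / ((m - b : ℕ) : ℚ) := by
  rw [logCoeff, neg_inj]
  have key : ∀ j ∈ Finset.Icc 1 m,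
      (1 / (j : ℚ)) *
        PowerSeries.coeff m ((PowerSeries.C r * PowerSeries.X - PowerSeries.X ^ 2) ^ j)
      = (1 / (j : ℚ)) * ((-1 : ℚ) ^ j * (-r) ^ (j - (m - j)) * (j.choose (m - j) : ℚ)) := by
    intro j hj
    rw [Finset.mem_Icc] at hj
    rw [coeff_key r m j hj.2]
  rw [Finset.sum_congr rfl key]
  -- restrict to the image set
  set S : Finset ℕ := (Finset.range (m / 2 + 1)).image (fun b => m - b) with hS
  have hsub : S ⊆ Finset.Icc 1 m := by
    intro j hjS
    simp only [hS, Finset.mem_image, Finset.mem_range] at hjS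
    obtain ⟨b, hb, rfl⟩ := hjS
    rw [Finset.mem_Icc]
    omega
  have hzero : ∀ j ∈ Finset.Icc 1 m, j ∉ S →
      (1 / (j : ℚ)) * ((-1 : ℚ) ^ j * (-r) ^ (j - (m - j)) * (j.choose (m - j) : ℚ)) = 0 := by
    intro j hj hjS
    rw [Finset.mem_Icc] at hj
    have h2j : 2 * j < m := by
      by_contra h
      apply hjS
      simp only [hS, Finset.mem_image, Finset.mem_range]
      exact ⟨m - j, by omega, by omega⟩
    have : j.choose (m - j) = 0 := Nat.choose_eq_zero_of_lt (by omega)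
    rw [this]
    simp
  rw [← Finset.sum_subset hsub hzero, hS,
    Finset.sum_image (by intro a ha b hb h; simp only [Finset.mem_coe, Finset.mem_range] at ha hb; simp only at h; omega)]
  refine Finset.sum_congr rfl ?_
  intro b hb
  rw [Finset.mem_range] at hb
  have h2b : 2 * b ≤ m := by omega
  have e1 : m - (m - b) = b := by omega
  have e2 : m - b - b = m - 2 * b := by omega
  rw [e1, e2]
  have : (-r : ℚ) ^ (m - 2 * b) = (-1 : ℚ) ^ (m - 2 * b) * r ^ (m - 2 * b) := by
    rw [neg_pow]
  rw [this]
  have hsign : (-1 : ℚ) ^ (m - b) * (-1 : ℚ) ^ (m - 2 * b) = (-1 : ℚ) ^ b := by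
    rw [← pow_add]
    have : m - b + (m - 2 * b) = b + 2 * (m - 2 * b) := by omega
    rw [this, pow_add, pow_mul]
    simp
  rw [← hsign]
  ring
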